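/- Let M, M', M'' be K-modules with submodules K,L ⊆ M, K',L' ⊆ M', K'',L'' ⊆ M''. Let f : K+L → K'+L' and g : K'+L' → K''+L'' be linear maps such that f restricts to maps K → K' and L → L', g restricts to maps K' → K'' and L' → L'', and the sequences 0 → K → K' → K'' → 0 and 0 → L → L' → L'' → 0 are exact. Then the sequence 0 → K∩L → K'∩L' → K''∩L'' → 0 (with restricted maps) is exact if and only if the sequence 0 → K+L → K'+L' → K''+L'' → 0 is exact. -/
import Mathlib


/-- Given maps `f : K+L → K'+L'` and `g : K'+L' → K''+L''` restricting to exact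
sequences `0 → K → K' → K'' → 0` and `0 → L → L' → L'' → 0`, the restricted
sequence `0 → K∩L → K'∩L' → K''∩L'' → 0` is exact iff
`0 → K+L → K'+L' → K''+L'' → 0` is exact. -/
theorem cap_exact_iff_sum_exact
    {R M M' M'' : Type*} [CommRing R]
    [AddCommGroup M] [Module R M] [AddCommGroup M'] [Module R M']
    [AddCommGroup M''] [Module R M'']
    (A B : Submodule R M) (A' B' : Submodule R M') (A'' B'' : Submodule R M'')
    (f : ↥(A ⊔ B) →ₗ[R] ↥(A' ⊔ B')) (g : ↥(A' ⊔ B') →ₗ[R] ↥(A'' ⊔ B''))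
    -- `f` and `g` restrict to the summands:
    (hfA : ∀ x : ↥(A ⊔ B), (x : M) ∈ A → ((f x : M') ∈ A'))
    (hfB : ∀ x : ↥(A ⊔ B), (x : M) ∈ B → ((f x : M') ∈ B'))
    (hgA : ∀ y : ↥(A' ⊔ B'), (y : M') ∈ A' → ((g y : M'') ∈ A''))
    (hgB : ∀ y : ↥(A' ⊔ B'), (y : M') ∈ B' → ((g y : M'') ∈ B''))
    -- exactness of `0 → K → K' → K'' → 0`:
    (hAinj : ∀ x y : ↥(A ⊔ B), (x : M) ∈ A → (y : M) ∈ A → f x = f y → x = y)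
    (hAexact : ∀ y : ↥(A' ⊔ B'), (y : M') ∈ A' →
      (g y = 0 ↔ ∃ x : ↥(A ⊔ B), (x : M) ∈ A ∧ f x = y))
    (hAsurj : ∀ z : ↥(A'' ⊔ B''), (z : M'') ∈ A'' →
      ∃ y : ↥(A' ⊔ B'), (y : M') ∈ A' ∧ g y = z)
    -- exactness of `0 → L → L' → L'' → 0`:
    (hBinj : ∀ x y : ↥(A ⊔ B), (x : M) ∈ B → (y : M) ∈ B → f x = f y → x = y)
    (hBexact : ∀ y : ↥(A' ⊔ B'), (y : M') ∈ B' →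
      (g y = 0 ↔ ∃ x : ↥(A ⊔ B), (x : M) ∈ B ∧ f x = y))
    (hBsurj : ∀ z : ↥(A'' ⊔ B''), (z : M'') ∈ B'' →
      ∃ y : ↥(A' ⊔ B'), (y : M') ∈ B' ∧ g y = z) :
    -- exactness of `0 → K∩L → K'∩L' → K''∩L'' → 0` iff exactness of
    -- `0 → K+L → K'+L' → K''+L'' → 0`
    ((∀ x y : ↥(A ⊔ B), (x : M) ∈ A ⊓ B → (y : M) ∈ A ⊓ B → f x = f y → x = y) ∧
      (∀ y : ↥(A' ⊔ B'), (y : M') ∈ A' ⊓ B' →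
        (g y = 0 ↔ ∃ x : ↥(A ⊔ B), (x : M) ∈ A ⊓ B ∧ f x = y)) ∧
      (∀ z : ↥(A'' ⊔ B''), (z : M'') ∈ A'' ⊓ B'' →
        ∃ y : ↥(A' ⊔ B'), (y : M') ∈ A' ⊓ B' ∧ g y = z)) ↔
    (Function.Injective f ∧
      (∀ y : ↥(A' ⊔ B'), g y = 0 ↔ ∃ x : ↥(A ⊔ B), f x = y) ∧
      Function.Surjective g) := by

  -- decompositions of elements of the sups
  have decomp : ∀ x : ↥(A ⊔ B), ∃ a b : ↥(A ⊔ B),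
      (a : M) ∈ A ∧ (b : M) ∈ B ∧ a + b = x := by
    rintro ⟨x, hx⟩
    rw [Submodule.mem_sup] at hx
    obtain ⟨a, ha, b, hb, rfl⟩ := hx
    exact ⟨⟨a, Submodule.mem_sup_left ha⟩, ⟨b, Submodule.mem_sup_right hb⟩,
      ha, hb, rfl⟩
  have decomp' : ∀ x : ↥(A' ⊔ B'), ∃ a b : ↥(A' ⊔ B'),
      (a : M') ∈ A' ∧ (b : M') ∈ B' ∧ a + b = x := by
    rintro ⟨x, hx⟩
    rw [Submodule.mem_sup] at hx
    obtain ⟨a, ha, b, hb, rfl⟩ := hx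
    exact ⟨⟨a, Submodule.mem_sup_left ha⟩, ⟨b, Submodule.mem_sup_right hb⟩,
      ha, hb, rfl⟩
  have decomp'' : ∀ x : ↥(A'' ⊔ B''), ∃ a b : ↥(A'' ⊔ B''),
      (a : M'') ∈ A'' ∧ (b : M'') ∈ B'' ∧ a + b = x := by
    rintro ⟨x, hx⟩
    rw [Submodule.mem_sup] at hx
    obtain ⟨a, ha, b, hb, rfl⟩ := hx
    exact ⟨⟨a, Submodule.mem_sup_left ha⟩, ⟨b, Submodule.mem_sup_right hb⟩,
      ha, hb, rfl⟩
  have hgf : ∀ x : ↥(A ⊔ B), g (f x) = 0 := by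
    intro x
    obtain ⟨a, b, ha, hb, rfl⟩ := decomp x
    have h1 : g (f a) = 0 := (hAexact (f a) (hfA a ha)).mpr ⟨a, ha, rfl⟩
    have h2 : g (f b) = 0 := (hBexact (f b) (hfB b hb)).mpr ⟨b, hb, rfl⟩
    rw [map_add, map_add, h1, h2, add_zero]
  constructor
  · rintro ⟨hcinj, hcex, hcsurj⟩
    refine ⟨?_, ?_, ?_⟩
    · -- injectivity of f
      have key : ∀ z : ↥(A ⊔ B), f z = 0 → z = 0 := by
        intro z hz
        obtain ⟨a, b, ha, hb, rfl⟩ := decomp z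
        rw [map_add] at hz
        have hab : f a = - f b := eq_neg_of_add_eq_zero_left hz
        have hmem : ((f a : ↥(A' ⊔ B')) : M') ∈ A' ⊓ B' := by
          refine Submodule.mem_inf.mpr ⟨hfA a ha, ?_⟩
          rw [hab]
          simpa using B'.neg_mem (hfB b hb)
        obtain ⟨c, hc, hfc⟩ := (hcex (f a) hmem).mp (hgf a)
        have hca : c = a := hAinj c a (Submodule.mem_inf.mp hc).1 ha hfc
        have hcb : c = -b := by
          refine hBinj c (-b) (Submodule.mem_inf.mp hc).2 ?_ ?_
          · simpa using B.neg_mem hb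
          · rw [hfc, map_neg, hab]
        have : a = -b := hca ▸ hcb
        rw [this, neg_add_cancel]
      intro x y hxy
      have := key (x - y) (by rw [map_sub, hxy, sub_self])
      exact sub_eq_zero.mp this
    · -- middle exactness
      intro y
      constructor
      · intro hgy
        obtain ⟨a', b', ha', hb', rfl⟩ := decomp' y
        rw [map_add] at hgy
        have hga' : ((g a' : ↥(A'' ⊔ B'')) : M'') ∈ A'' ⊓ B'' := by
          refine Submodule.mem_inf.mpr ⟨hgA a' ha', ?_⟩
          have : g a' = - g b' := eq_neg_of_add_eq_zero_left hgy
          rw [this]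
          simpa using B''.neg_mem (hgB b' hb')
        obtain ⟨c', hc', hgc'⟩ := hcsurj (g a') hga'
        have hc'A : (c' : M') ∈ A' := (Submodule.mem_inf.mp hc').1
        have hc'B : (c' : M') ∈ B' := (Submodule.mem_inf.mp hc').2
        have h1 : g (a' - c') = 0 := by rw [map_sub, hgc', sub_self]
        have h2 : g (b' + c') = 0 := by
          rw [map_add, hgc']
          have : g a' = - g b' := eq_neg_of_add_eq_zero_left hgy
          rw [this, add_neg_cancel]
        obtain ⟨a, ha, hfa⟩ := (hAexact (a' - c')
          (by rw [AddSubgroupClass.coe_sub]; exact sub_mem ha' hc'A)).mp h1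
        obtain ⟨b, hb, hfb⟩ := (hBexact (b' + c')
          (by rw [Submodule.coe_add]; exact add_mem hb' hc'B)).mp h2
        refine ⟨a + b, ?_⟩
        rw [map_add, hfa, hfb]
        abel
      · rintro ⟨x, rfl⟩
        exact hgf x
    · -- surjectivity of g
      intro z
      obtain ⟨a'', b'', ha'', hb'', rfl⟩ := decomp'' z
      obtain ⟨a', ha', hga⟩ := hAsurj a'' ha''
      obtain ⟨b', hb', hgb⟩ := hBsurj b'' hb''
      exact ⟨a' + b', by rw [map_add, hga, hgb]⟩
  · rintro ⟨hinj, hex, hsurj⟩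
    refine ⟨fun x y _ _ h => hinj h, ?_, ?_⟩
    · intro y hy
      constructor
      · intro hgy
        obtain ⟨a, ha, hfa⟩ := (hAexact y (Submodule.mem_inf.mp hy).1).mp hgy
        obtain ⟨b, hb, hfb⟩ := (hBexact y (Submodule.mem_inf.mp hy).2).mp hgy
        have hab : a = b := hinj (by rw [hfa, hfb])
        exact ⟨a, Submodule.mem_inf.mpr ⟨ha, by rw [hab]; exact hb⟩, hfa⟩
      · rintro ⟨x, _, rfl⟩
        exact hgf x
    · intro z hz
      obtain ⟨a', ha', hga⟩ := hAsurj z (Submodule.mem_inf.mp hz).1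
      obtain ⟨b', hb', hgb⟩ := hBsurj z (Submodule.mem_inf.mp hz).2
      have h0 : g (a' - b') = 0 := by rw [map_sub, hga, hgb, sub_self]
      obtain ⟨x, hx⟩ := (hex (a' - b')).mp h0
      obtain ⟨a, b, ha, hb, rfl⟩ := decomp x
      rw [map_add] at hx
      refine ⟨a' - f a, Submodule.mem_inf.mpr ⟨?_, ?_⟩, ?_⟩
      · rw [AddSubgroupClass.coe_sub]
        exact sub_mem ha' (hfA a ha)
      · have heq : a' - f a = b' + f b := by
          have := hx
          -- f a + f b = a' - b'
          rw [eq_sub_iff_add_eq] at this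
          -- f a + f b + b' = a'
          rw [sub_eq_iff_eq_add]
          rw [← this]
          abel
        rw [heq, Submodule.coe_add]
        exact add_mem hb' (hfB b hb)
      · have hgfa : g (f a) = 0 := (hAexact (f a) (hfA a ha)).mpr ⟨a, ha, rfl⟩
        rw [map_sub, hga, hgfa, sub_zero]
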